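/- Local optimality of the sequential mechanism: let Y be the output of any mechanism for which Y_i ∈ {X_i, ∗} almost surely (faithfulness) and Y_i is conditionally independent of X_K given Y_{[i−1]} (local privacy). Then for every history y_{[i−1]} occurring with positive probability, P(Y_i = ∗ | Y_{[i−1]} = y_{[i−1]}) ≥ 1 − ∑_{a∈𝒳} min_{u} P(X_i = a | X_K = u, Y_{[i−1]} = y_{[i−1]}), where the minimum is over u ∈ 𝒳^{|K|} with P(X_K = u, Y_{[i−1]} = y_{[i−1]}) > 0. Moreover, the sequential privacy mechanism attains this lower bound with equality, and hence minimizes the conditional erasure probability at step i among all such mechanisms. -/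
import Mathlib


open Finset
open scoped Classical

noncomputable section

namespace GenotypeHiding

variable {X : Type} [Fintype X] [DecidableEq X]

/-- Restriction of a sequence `x` to the sensitive positions `K`. -/
def restr {n : ℕ} (K : Finset (Fin n)) (x : Fin n → X) : ↥K → X := fun i => x (i : Fin n)

/-- `y` agrees with the history `h` on all coordinates `j` with `j < t`
(i.e. the event `Y_{[t]} = h_{[t]}`, zero-based). -/
def agreeN {n : ℕ} (t : ℕ) (y h : Fin n → Option X) : Prop :=
  ∀ j : Fin n, (j : ℕ) < t → y j = h j

/-- `P(X = x, Y_{[t]} = h_{[t]})` under the joint law `J` of `(X, Y)`. -/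
def prXH {n : ℕ} (J : (Fin n → X) → (Fin n → Option X) → ℝ) (t : ℕ)
    (x : Fin n → X) (h : Fin n → Option X) : ℝ :=
  ∑ y : Fin n → Option X, if agreeN t y h then J x y else 0

/-- `P(Y_i = b, X = x, Y_{[t]} = h_{[t]})` under the joint law `J`. -/
def prXHY {n : ℕ} (J : (Fin n → X) → (Fin n → Option X) → ℝ) (t : ℕ)
    (x : Fin n → X) (h : Fin n → Option X) (i : Fin n) (b : Option X) : ℝ :=
  ∑ y : Fin n → Option X, if y i = b ∧ agreeN t y h then J x y else 0

/-- `P(Y_{[t]} = h_{[t]})` under the joint law `J`. -/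
def prH {n : ℕ} (J : (Fin n → X) → (Fin n → Option X) → ℝ) (t : ℕ)
    (h : Fin n → Option X) : ℝ :=
  ∑ x : Fin n → X, prXH J t x h

/-- `P(X_K = u, Y_{[t]} = h_{[t]})` under the joint law `J`. -/
def prKH {n : ℕ} (J : (Fin n → X) → (Fin n → Option X) → ℝ) (K : Finset (Fin n))
    (t : ℕ) (u : ↥K → X) (h : Fin n → Option X) : ℝ :=
  ∑ x : Fin n → X, ∑ y : Fin n → Option X,
    if restr K x = u ∧ agreeN t y h then J x y else 0

/-- `P(X_i = a, X_K = u, Y_{[t]} = h_{[t]})` under the joint law `J`. -/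
def prIKH {n : ℕ} (J : (Fin n → X) → (Fin n → Option X) → ℝ) (K : Finset (Fin n))
    (t : ℕ) (i : Fin n) (a : X) (u : ↥K → X) (h : Fin n → Option X) : ℝ :=
  ∑ x : Fin n → X, ∑ y : Fin n → Option X,
    if x i = a ∧ restr K x = u ∧ agreeN t y h then J x y else 0

/-- `P(Y_i = b, X_K = u, Y_{[t]} = h_{[t]})` under the joint law `J`. -/
def prYKH {n : ℕ} (J : (Fin n → X) → (Fin n → Option X) → ℝ) (K : Finset (Fin n))
    (t : ℕ) (i : Fin n) (b : Option X) (u : ↥K → X) (h : Fin n → Option X) : ℝ :=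
  ∑ x : Fin n → X, ∑ y : Fin n → Option X,
    if y i = b ∧ restr K x = u ∧ agreeN t y h then J x y else 0

/-- `P(X_i = a | X_K = u, Y_{[t]} = h_{[t]})` under the joint law `J`. -/
def condX {n : ℕ} (J : (Fin n → X) → (Fin n → Option X) → ℝ) (K : Finset (Fin n))
    (t : ℕ) (i : Fin n) (a : X) (u : ↥K → X) (h : Fin n → Option X) : ℝ :=
  prIKH J K t i a u h / prKH J K t u h

/-- `min_u P(X_i = a | X_K = u, Y_{[t]} = h_{[t]})`, the minimum being over all `u` with
`P(X_K = u, Y_{[t]} = h_{[t]}) > 0`. -/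
def minC {n : ℕ} (J : (Fin n → X) → (Fin n → Option X) → ℝ) (K : Finset (Fin n))
    (t : ℕ) (i : Fin n) (a : X) (h : Fin n → Option X) : ℝ :=
  sInf {r : ℝ | ∃ u : ↥K → X, 0 < prKH J K t u h ∧ r = condX J K t i a u h}

/-- `J` is the joint law of `(X, Y)` where `Y` is generated from `X ∼ p` by the sequential
privacy mechanism: `Y_i ∈ {X_i, ∗}`, and conditionally on `X = x` and the previously
generated outputs `Y_{[i-1]} = y_{[i-1]}`, the mechanism releases `Y_i = x_i` with
probability `min_u P(X_i = x_i | X_K = u, Y_{[i-1]}) / P(X_i = x_i | X_K = x_K, Y_{[i-1]})`,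
and erases (`Y_i = ∗`) with the complementary probability. -/
def IsSequentialMechanism {n : ℕ} (p : (Fin n → X) → ℝ) (K : Finset (Fin n))
    (J : (Fin n → X) → (Fin n → Option X) → ℝ) : Prop :=
  (∀ x y, 0 ≤ J x y) ∧
  (∀ x, ∑ y : Fin n → Option X, J x y = p x) ∧
  (∀ x y, 0 < J x y → ∀ i : Fin n, y i = some (x i) ∨ y i = none) ∧
  (∀ (i : Fin n) (x : Fin n → X) (h : Fin n → Option X), 0 < prXH J (i : ℕ) x h →
    prXHY J (i : ℕ) x h i (some (x i))
      = (minC J K (i : ℕ) i (x i) h / condX J K (i : ℕ) i (x i) (restr K x) h)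
          * prXH J (i : ℕ) x h)


/-- `P(Y_i = b, Y_{[t]} = h_{[t]})` under the joint law `J`. -/
def prYH {n : ℕ} (J : (Fin n → X) → (Fin n → Option X) → ℝ) (t : ℕ)
    (i : Fin n) (b : Option X) (h : Fin n → Option X) : ℝ :=
  ∑ x : Fin n → X, ∑ y : Fin n → Option X,
    if y i = b ∧ agreeN t y h then J x y else 0

section AuxLemmas

variable {n : ℕ}

lemma ite_nonneg' {P : Prop} [Decidable P] {c : ℝ} (hc : 0 ≤ c) :
    0 ≤ if P then c else 0 := by split <;> simp [hc]

lemma ite_le_ite' {P Q : Prop} [Decidable P] [Decidable Q] {c : ℝ} (hPQ : P → Q) (hc : 0 ≤ c) :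
    (if P then c else 0) ≤ (if Q then c else 0) := by
  by_cases h1 : P
  · rw [if_pos h1, if_pos (hPQ h1)]
  · rw [if_neg h1]; exact ite_nonneg' hc

variable (J : (Fin n → X) → (Fin n → Option X) → ℝ) (hJ0 : ∀ x y, 0 ≤ J x y)
  (K : Finset (Fin n)) (t : ℕ) (i : Fin n) (h : Fin n → Option X)

include hJ0

lemma prXH_nonneg (x : Fin n → X) : 0 ≤ prXH J t x h :=
  Finset.sum_nonneg fun _ _ => ite_nonneg' (hJ0 _ _)

lemma prH_nonneg : 0 ≤ prH J t h :=
  Finset.sum_nonneg fun x _ => prXH_nonneg J hJ0 t h x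

lemma prKH_nonneg (u : ↥K → X) : 0 ≤ prKH J K t u h :=
  Finset.sum_nonneg fun _ _ => Finset.sum_nonneg fun _ _ => ite_nonneg' (hJ0 _ _)

lemma prIKH_nonneg (a : X) (u : ↥K → X) : 0 ≤ prIKH J K t i a u h :=
  Finset.sum_nonneg fun _ _ => Finset.sum_nonneg fun _ _ => ite_nonneg' (hJ0 _ _)

lemma prYH_nonneg (b : Option X) : 0 ≤ prYH J t i b h :=
  Finset.sum_nonneg fun _ _ => Finset.sum_nonneg fun _ _ => ite_nonneg' (hJ0 _ _)

lemma prXHY_nonneg (x : Fin n → X) (b : Option X) : 0 ≤ prXHY J t x h i b :=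
  Finset.sum_nonneg fun _ _ => ite_nonneg' (hJ0 _ _)

lemma prXHY_le_prXH (x : Fin n → X) (b : Option X) : prXHY J t x h i b ≤ prXH J t x h :=
  Finset.sum_le_sum fun _ _ => ite_le_ite' (fun hc => hc.2) (hJ0 _ _)

lemma prIKH_le_prKH (a : X) (u : ↥K → X) : prIKH J K t i a u h ≤ prKH J K t u h :=
  Finset.sum_le_sum fun _ _ => Finset.sum_le_sum fun _ _ =>
    ite_le_ite' (fun hc => ⟨hc.2.1, hc.2.2⟩) (hJ0 _ _)

lemma prYKH_le_prIKH (hF : ∀ x y, 0 < J x y → ∀ i : Fin n, y i = some (x i) ∨ y i = none)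
    (a : X) (u : ↥K → X) : prYKH J K t i (some a) u h ≤ prIKH J K t i a u h := by
  refine Finset.sum_le_sum fun x _ => Finset.sum_le_sum fun y _ => ?_
  rcases (hJ0 x y).lt_or_eq with hpos | hz
  · refine ite_le_ite' (fun hc => ?_) (hJ0 x y)
    rcases hF x y hpos i with h' | h'
    · have := hc.1.symm.trans h'
      exact ⟨(Option.some.inj this).symm, hc.2.1, hc.2.2⟩
    · exact absurd (hc.1.symm.trans h') (by simp)
  · simp [← hz]

omit hJ0 in
lemma sum_prYH_eq : ∑ b : Option X, prYH J t i b h = prH J t h := by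
  unfold prYH prH prXH
  rw [Finset.sum_comm]
  refine Finset.sum_congr rfl fun x _ => ?_
  rw [Finset.sum_comm]
  refine Finset.sum_congr rfl fun y _ => ?_
  by_cases ha : agreeN t y h <;> simp [ha]

omit hJ0 in
lemma prYH_none_eq : prYH J t i none h = prH J t h - ∑ a : X, prYH J t i (some a) h := by
  have := sum_prYH_eq J t i h
  rw [Fintype.sum_option] at this
  linarith

omit hJ0 in
lemma sum_prKH_eq : ∑ u : ↥K → X, prKH J K t u h = prH J t h := by
  unfold prKH prH prXH
  rw [Finset.sum_comm]
  refine Finset.sum_congr rfl fun x _ => ?_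
  rw [Finset.sum_comm]
  refine Finset.sum_congr rfl fun y _ => ?_
  by_cases ha : agreeN t y h <;> simp [ha]

lemma exists_pos_prKH (hH : 0 < prH J t h) : ∃ u : ↥K → X, 0 < prKH J K t u h := by
  by_contra hc
  push_neg at hc
  have : ∑ u : ↥K → X, prKH J K t u h = 0 :=
    le_antisymm (Finset.sum_nonpos fun u _ => hc u)
      (Finset.sum_nonneg fun u _ => prKH_nonneg J hJ0 K t h u)
  rw [sum_prKH_eq] at this
  exact absurd this hH.ne'

lemma condX_nonneg (a : X) (u : ↥K → X) : 0 ≤ condX J K t i a u h :=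
  div_nonneg (prIKH_nonneg J hJ0 K t i h a u) (prKH_nonneg J hJ0 K t h u)

lemma minC_nonneg (a : X) : 0 ≤ minC J K t i a h := by
  apply Real.sInf_nonneg
  rintro r ⟨u, -, rfl⟩
  exact condX_nonneg J hJ0 K t i h a u

omit hJ0 in
lemma prIKH_eq (a : X) (u : ↥K → X) :
    prIKH J K t i a u h
      = ∑ x : Fin n → X, if x i = a ∧ restr K x = u then prXH J t x h else 0 := by
  unfold prIKH prXH
  refine Finset.sum_congr rfl fun x _ => ?_
  by_cases hx : x i = a ∧ restr K x = u
  · rw [if_pos hx]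
    exact Finset.sum_congr rfl fun y _ => by simp [hx.1, hx.2]
  · rw [if_neg hx]
    exact Finset.sum_eq_zero fun y _ => if_neg (by tauto)

/-- key bound for an arbitrary faithful, locally private mechanism -/
lemma key_bound
    (hF : ∀ x y, 0 < J x y → ∀ i : Fin n, y i = some (x i) ∨ y i = none)
    (hLP : ∀ (b : Option X) (u : ↥K → X),
      prYKH J K t i b u h * prH J t h = prYH J t i b h * prKH J K t u h)
    (hH : 0 < prH J t h) (a : X) :
    prYH J t i (some a) h ≤ minC J K t i a h * prH J t h := by
  obtain ⟨u0, hu0⟩ := exists_pos_prKH J hJ0 K t h hH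
  have hle : prYH J t i (some a) h / prH J t h ≤ minC J K t i a h := by
    refine le_csInf ⟨condX J K t i a u0 h, u0, hu0, rfl⟩ ?_
    rintro r ⟨u, hu, rfl⟩
    have hc : condX J K t i a u h = prIKH J K t i a u h / prKH J K t u h := rfl
    rw [hc, div_le_div_iff₀ hH hu]
    have h1 := hLP (some a) u
    have h2 := mul_le_mul_of_nonneg_right (prYKH_le_prIKH J hJ0 K t i h hF a u) hH.le
    linarith
  calc prYH J t i (some a) h = prYH J t i (some a) h / prH J t h * prH J t h := by
        field_simp
    _ ≤ minC J K t i a h * prH J t h := mul_le_mul_of_nonneg_right hle hH.le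

/-- key equality for the sequential mechanism -/
lemma key_eq (hF : ∀ x y, 0 < J x y → ∀ i : Fin n, y i = some (x i) ∨ y i = none)
    (hM : ∀ (x : Fin n → X), 0 < prXH J t x h →
      prXHY J t x h i (some (x i))
        = (minC J K t i (x i) h / condX J K t i (x i) (restr K x) h) * prXH J t x h)
    (hH : 0 < prH J t h) (a : X) :
    prYH J t i (some a) h = minC J K t i a h * prH J t h := by
  have hA : prYH J t i (some a) h
      = ∑ x : Fin n → X, (if x i = a then
          (minC J K t i a h / condX J K t i a (restr K x) h) * prXH J t x h else 0) := by
    unfold prYH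
    refine Finset.sum_congr rfl fun x _ => ?_
    by_cases hx : x i = a
    · rw [if_pos hx]
      have h1 : (∑ y : Fin n → Option X, if y i = some a ∧ agreeN t y h then J x y else 0)
          = prXHY J t x h i (some (x i)) := by rw [hx]; rfl
      rw [h1]
      by_cases hpx : 0 < prXH J t x h
      · rw [hM x hpx, hx]
      · have hx0 : prXH J t x h = 0 := le_antisymm (not_lt.mp hpx) (prXH_nonneg J hJ0 t h x)
        have hxy0 : prXHY J t x h i (some (x i)) = 0 :=
          le_antisymm (hx0 ▸ prXHY_le_prXH J hJ0 t i h x (some (x i)))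
            (prXHY_nonneg J hJ0 t i h x (some (x i)))
        rw [hxy0, hx0, mul_zero]
    · rw [if_neg hx]
      refine Finset.sum_eq_zero fun y _ => ?_
      by_cases hc : y i = some a ∧ agreeN t y h
      · rw [if_pos hc]
        by_contra hne
        have hpos : 0 < J x y := (hJ0 x y).lt_of_ne (Ne.symm hne)
        rcases hF x y hpos i with h' | h'
        · exact hx (Option.some.inj (hc.1.symm.trans h')).symm
        · exact absurd (hc.1.symm.trans h') (by simp)
      · rw [if_neg hc]
  have hB : prYH J t i (some a) h
      = ∑ u : ↥K → X, (minC J K t i a h / condX J K t i a u h) * prIKH J K t i a u h := by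
    rw [hA]
    calc ∑ x : Fin n → X, (if x i = a then
            (minC J K t i a h / condX J K t i a (restr K x) h) * prXH J t x h else 0)
        = ∑ x : Fin n → X, ∑ u : ↥K → X, (if restr K x = u then (if x i = a then
            (minC J K t i a h / condX J K t i a u h) * prXH J t x h else 0) else 0) := by
          refine Finset.sum_congr rfl fun x _ => ?_
          rw [Finset.sum_ite_eq]
          simp
      _ = ∑ u : ↥K → X, ∑ x : Fin n → X, (if restr K x = u then (if x i = a then
            (minC J K t i a h / condX J K t i a u h) * prXH J t x h else 0) else 0) :=
          Finset.sum_comm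
      _ = ∑ u : ↥K → X, (minC J K t i a h / condX J K t i a u h) * prIKH J K t i a u h := by
          refine Finset.sum_congr rfl fun u _ => ?_
          rw [prIKH_eq J K t i h a u, Finset.mul_sum]
          refine Finset.sum_congr rfl fun x _ => ?_
          by_cases h1 : restr K x = u <;> by_cases h2 : x i = a <;> simp [h1, h2]
  have hC : ∀ u : ↥K → X,
      (minC J K t i a h / condX J K t i a u h) * prIKH J K t i a u h
        = minC J K t i a h * prKH J K t u h := by
    intro u
    by_cases hK0 : 0 < prKH J K t u h
    · by_cases hI0 : 0 < prIKH J K t i a u h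
      · have hc : condX J K t i a u h = prIKH J K t i a u h / prKH J K t u h := rfl
        rw [hc]
        field_simp
      · have hI : prIKH J K t i a u h = 0 :=
          le_antisymm (not_lt.mp hI0) (prIKH_nonneg J hJ0 K t i h a u)
        have hm : minC J K t i a h = 0 := by
          refine le_antisymm ?_ (minC_nonneg J hJ0 K t i h a)
          refine csInf_le ⟨0, ?_⟩ ⟨u, hK0, ?_⟩
          · rintro r ⟨v, -, rfl⟩
            exact condX_nonneg J hJ0 K t i h a v
          · show (0 : ℝ) = prIKH J K t i a u h / prKH J K t u h
            rw [hI, zero_div]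
        rw [hI, hm, mul_zero, zero_mul]
    · have hKq : prKH J K t u h = 0 :=
        le_antisymm (not_lt.mp hK0) (prKH_nonneg J hJ0 K t h u)
      have hI : prIKH J K t i a u h = 0 :=
        le_antisymm (hKq ▸ prIKH_le_prKH J hJ0 K t i h a u)
          (prIKH_nonneg J hJ0 K t i h a u)
      rw [hI, hKq, mul_zero, mul_zero]
  rw [hB, Finset.sum_congr rfl fun u _ => hC u, ← Finset.mul_sum, sum_prKH_eq]

end AuxLemmas

/-- local optimality of the sequential mechanism: if `J'` is the joint law
of `(X, Y)` for any mechanism which is faithful (`Y_i ∈ {X_i, ∗}` a.s.) and locally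
private (`Y_i` conditionally independent of `X_K` given `Y_{[i-1]}`), then for every
positive-probability history `h`,
`P(Y_i = ∗ | Y_{[i-1]} = h) ≥ 1 - ∑_a min_u P(X_i = a | X_K = u, Y_{[i-1]} = h)`.
Moreover the sequential privacy mechanism `J` attains this bound with equality, hence
minimizes the conditional erasure probability at each step. -/
theorem sequentialMechanism_locally_optimal {n : ℕ} (hn : 1 ≤ n)
    (hX : 2 ≤ Fintype.card X)
    (p : (Fin n → X) → ℝ) (hp0 : ∀ x, 0 ≤ p x) (hp1 : ∑ x : Fin n → X, p x = 1)
    (K : Finset (Fin n))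
    -- `J'` : an arbitrary faithful, locally private mechanism
    (J' : (Fin n → X) → (Fin n → Option X) → ℝ)
    (hJ'0 : ∀ x y, 0 ≤ J' x y)
    (hJ'marg : ∀ x, ∑ y : Fin n → Option X, J' x y = p x)
    (hJ'faithful : ∀ x y, 0 < J' x y → ∀ i : Fin n, y i = some (x i) ∨ y i = none)
    (hJ'localPriv : ∀ (i : Fin n) (b : Option X) (u : ↥K → X) (h : Fin n → Option X),
      prYKH J' K (i : ℕ) i b u h * prH J' (i : ℕ) h
        = prYH J' (i : ℕ) i b h * prKH J' K (i : ℕ) u h)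
    -- `J` : the sequential privacy mechanism
    (J : (Fin n → X) → (Fin n → Option X) → ℝ)
    (hJ : IsSequentialMechanism p K J) :
    (∀ (i : Fin n) (h : Fin n → Option X), 0 < prH J' (i : ℕ) h →
      prYH J' (i : ℕ) i none h / prH J' (i : ℕ) h
        ≥ 1 - ∑ a : X, minC J' K (i : ℕ) i a h) ∧
    (∀ (i : Fin n) (h : Fin n → Option X), 0 < prH J (i : ℕ) h →
      prYH J (i : ℕ) i none h / prH J (i : ℕ) h
        = 1 - ∑ a : X, minC J K (i : ℕ) i a h) := by
  obtain ⟨hJ0, hJmarg, hJF, hJM⟩ := hJ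
  constructor
  · intro i h hH
    have key : ∀ a : X, prYH J' (i : ℕ) i (some a) h ≤ minC J' K (i : ℕ) i a h * prH J' (i : ℕ) h :=
      fun a => key_bound J' hJ'0 K (i : ℕ) i h hJ'faithful (fun b u => hJ'localPriv i b u h) hH a
    have hnone := prYH_none_eq J' (i : ℕ) i h
    have hsum : ∑ a : X, prYH J' (i : ℕ) i (some a) h
        ≤ (∑ a : X, minC J' K (i : ℕ) i a h) * prH J' (i : ℕ) h := by
      rw [Finset.sum_mul]
      exact Finset.sum_le_sum fun a _ => key a
    rw [ge_iff_le, le_div_iff₀ hH]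
    have hring : (1 - ∑ a : X, minC J' K (i : ℕ) i a h) * prH J' (i : ℕ) h
        = prH J' (i : ℕ) h - (∑ a : X, minC J' K (i : ℕ) i a h) * prH J' (i : ℕ) h := by ring
    linarith
  · intro i h hH
    have key : ∀ a : X, prYH J (i : ℕ) i (some a) h = minC J K (i : ℕ) i a h * prH J (i : ℕ) h :=
      fun a => key_eq J hJ0 K (i : ℕ) i h hJF (fun x hx => hJM i x h hx) hH a
    have hnone := prYH_none_eq J (i : ℕ) i h
    have hsum : ∑ a : X, prYH J (i : ℕ) i (some a) h
        = (∑ a : X, minC J K (i : ℕ) i a h) * prH J (i : ℕ) h := by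
      rw [Finset.sum_mul]
      exact Finset.sum_congr rfl fun a _ => key a
    rw [div_eq_iff hH.ne']
    rw [hnone, hsum]
    ring

end GenotypeHiding
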